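/- For every μ in the positive root lattice of B_r, Lusztig's q-analogue of the Kostant partition function satisfies 𝒫(μ;q) = Σ_{T ∈ 𝒯(∞), −wt(T) = μ} q^{|T|} as polynomials in q (both sums are finite). -/

import Mathlib

/-- Marginally large semistandard Young tableaux of type `B_r`, on the totally
ordered alphabet `{1 ≺ ⋯ ≺ r ≺ 0 ≺ r̄ ≺ ⋯ ≺ 1̄}`, encoded by the order
isomorphism onto `{1, …, 2r+1} ⊂ ℕ` sending `k ↦ k`, `0 ↦ r+1`, `k̄ ↦ 2r+2-k`.
Conditions: exactly `r` rows, rows weakly increasing, columns strictly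
increasing, first column `1, …, r`, every entry of row `i` is `≼ ī`, the entry
`0` occurs at most once in each row, and the number of `i`-entries in row `i`
exceeds the number of boxes in row `i+1` by exactly one. -/
structure TabB (r : ℕ) where
  row : Fin r → List ℕ
  entry_mem : ∀ i : Fin r, ∀ e ∈ row i, 1 ≤ e ∧ e ≤ 2 * r + 1
  row_weak : ∀ i : Fin r, (row i).Chain' (· ≤ ·)
  first_col : ∀ i : Fin r, (row i).head? = some (i.1 + 1)
  row_bound : ∀ i : Fin r, ∀ e ∈ row i, e ≤ 2 * r + 1 - i.1
  zero_once : ∀ i : Fin r, (row i).count (r + 1) ≤ 1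
  col_le : ∀ i : Fin r, ∀ h : i.1 + 1 < r,
    (row ⟨i.1 + 1, h⟩).length ≤ (row i).length
  col_strict : ∀ i : Fin r, ∀ h : i.1 + 1 < r, ∀ j < (row ⟨i.1 + 1, h⟩).length,
    (row i).getD j 0 < (row ⟨i.1 + 1, h⟩).getD j 0
  marg_large : ∀ i : Fin r, (row i).count (i.1 + 1) =
    (if h : i.1 + 1 < r then (row ⟨i.1 + 1, h⟩).length else 0) + 1

/-- `ℓ_{i,x}(T)`: the number of entries with code `x` in row `i` (row `i : Fin r`
has label `i+1`; the symbol `0` has code `r+1` and `k̄` has code `2r+2-k`). -/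
def ellB (r : ℕ) (T : TabB r) (i : Fin r) (x : ℕ) : ℕ := (T.row i).count x

/-- `seg′(T)`: the number of pairs `(i,x)` with `x ≻ i` and `ℓ_{i,x}(T) > 0`. -/
def segB' (r : ℕ) (T : TabB r) : ℕ :=
  ∑ i : Fin r, ((Finset.Icc (i.1 + 2) (2 * r + 1)).filter fun x => ellB r T i x ≠ 0).card

/-- `e_B(T)`: the number of rows `i` containing both a `0`-segment and an
`ī`-segment. -/
def eB (r : ℕ) (T : TabB r) : ℕ :=
  (Finset.univ.filter fun i : Fin r =>
    ellB r T i (r + 1) ≠ 0 ∧ ellB r T i (2 * r + 1 - i.1) ≠ 0).card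

/-- `seg(T) = seg′(T) - e_B(T)`. -/
def segB (r : ℕ) (T : TabB r) : ℕ := segB' r T - eB r T

/-- The positive root `β_{i,k} = α_i + ⋯ + α_k` of `B_r` (`1 ≤ i ≤ k ≤ r`), in
simple-root coordinates. -/
def betaB (r : ℕ) (i k : ℕ) : Fin r → ℕ :=
  fun j => if i ≤ j.1 + 1 ∧ j.1 + 1 ≤ k then 1 else 0

/-- The positive root `γ_{i,k} = α_i + ⋯ + α_{k-1} + 2α_k + ⋯ + 2α_r` of `B_r`
(`1 ≤ i < k ≤ r`), in simple-root coordinates. -/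
def gammaB (r : ℕ) (i k : ℕ) : Fin r → ℕ :=
  fun j => if i ≤ j.1 + 1 ∧ j.1 + 1 ≤ k - 1 then 1 else if k ≤ j.1 + 1 then 2 else 0

/-- The set of positive roots of `B_r`. -/
def posRootsB (r : ℕ) : Finset (Fin r → ℕ) :=
  ((Finset.Icc 1 r ×ˢ Finset.Icc 1 r).filter fun p => p.1 ≤ p.2).image
      (fun p => betaB r p.1 p.2) ∪
    ((Finset.Icc 1 r ×ˢ Finset.Icc 1 r).filter fun p => p.1 < p.2).image
      (fun p => gammaB r p.1 p.2)

/-- `Ξ(T)`, extended by zero to all vectors: `Ξ(T)(β_{i,k-1}) = ℓ_{i,k}(T)` for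
`i < k ≤ r`, `Ξ(T)(β_{i,r}) = 2ℓ_{i,ī}(T) + ℓ_{i,0}(T)`, and
`Ξ(T)(γ_{i,k}) = ℓ_{i,k̄}(T)` for `i < k ≤ r`. -/
def XiB (r : ℕ) (T : TabB r) (v : Fin r → ℕ) : ℕ :=
  ∑ i : Fin r,
    ((∑ k ∈ Finset.Icc (i.1 + 2) r,
        if v = betaB r (i.1 + 1) (k - 1) then ellB r T i k else 0) +
      (if v = betaB r (i.1 + 1) r then
        2 * ellB r T i (2 * r + 1 - i.1) + ellB r T i (r + 1) else 0) +
      (∑ k ∈ Finset.Icc (i.1 + 2) r,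
        if v = gammaB r (i.1 + 1) k then ellB r T i (2 * r + 2 - k) else 0))

/-- `-wt(T) = Σ_α Ξ(T)(α)·α`, in simple-root coordinates. -/
def negwtB (r : ℕ) (T : TabB r) : Fin r → ℕ :=
  ∑ v ∈ posRootsB r, XiB r T v • v

/-- `|T|`: the number of boxes in the reduced form of `T`, counting each
`ī`-box in row `i` with multiplicity `2`. -/
def sizeB (r : ℕ) (T : TabB r) : ℕ :=
  ∑ i : Fin r,
    ((∑ x ∈ Finset.Icc (i.1 + 2) (2 * r + 1), ellB r T i x) +
      ellB r T i (2 * r + 1 - i.1))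


section RootLemmas

lemma betaB_inj {r i k i' k' : ℕ} (h1 : 1 ≤ i) (h2 : i ≤ k) (h3 : k ≤ r)
    (h1' : 1 ≤ i') (h2' : i' ≤ k') (h3' : k' ≤ r)
    (h : betaB r i k = betaB r i' k') : i = i' ∧ k = k' := by
  have f1 : i' ≤ i ∧ i ≤ k' := by
    have e : (if i ≤ (i-1)+1 ∧ (i-1)+1 ≤ k then (1:ℕ) else 0)
        = (if i' ≤ (i-1)+1 ∧ (i-1)+1 ≤ k' then 1 else 0) := congrFun h ⟨i-1, by omega⟩
    split_ifs at e <;> omega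
  have f2 : i ≤ i' := by
    have e : (if i ≤ (i'-1)+1 ∧ (i'-1)+1 ≤ k then (1:ℕ) else 0)
        = (if i' ≤ (i'-1)+1 ∧ (i'-1)+1 ≤ k' then 1 else 0) := congrFun h ⟨i'-1, by omega⟩
    split_ifs at e <;> omega
  have f3 : k ≤ k' := by
    have e : (if i ≤ (k-1)+1 ∧ (k-1)+1 ≤ k then (1:ℕ) else 0)
        = (if i' ≤ (k-1)+1 ∧ (k-1)+1 ≤ k' then 1 else 0) := congrFun h ⟨k-1, by omega⟩
    split_ifs at e <;> omega
  have f4 : k' ≤ k := by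
    have e : (if i ≤ (k'-1)+1 ∧ (k'-1)+1 ≤ k then (1:ℕ) else 0)
        = (if i' ≤ (k'-1)+1 ∧ (k'-1)+1 ≤ k' then 1 else 0) := congrFun h ⟨k'-1, by omega⟩
    split_ifs at e <;> omega
  omega

lemma gammaB_inj {r i k i' k' : ℕ} (h1 : 1 ≤ i) (h2 : i < k) (h3 : k ≤ r)
    (h1' : 1 ≤ i') (h2' : i' < k') (h3' : k' ≤ r)
    (h : gammaB r i k = gammaB r i' k') : i = i' ∧ k = k' := by
  have f1 : k' ≤ k := by
    have e : (if i ≤ (k-1)+1 ∧ (k-1)+1 ≤ k-1 then (1:ℕ) else if k ≤ (k-1)+1 then 2 else 0)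
        = (if i' ≤ (k-1)+1 ∧ (k-1)+1 ≤ k'-1 then 1 else if k' ≤ (k-1)+1 then 2 else 0) :=
      congrFun h ⟨k-1, by omega⟩
    split_ifs at e <;> omega
  have f2 : k ≤ k' := by
    have e : (if i ≤ (k'-1)+1 ∧ (k'-1)+1 ≤ k-1 then (1:ℕ) else if k ≤ (k'-1)+1 then 2 else 0)
        = (if i' ≤ (k'-1)+1 ∧ (k'-1)+1 ≤ k'-1 then 1 else if k' ≤ (k'-1)+1 then 2 else 0) :=
      congrFun h ⟨k'-1, by omega⟩
    split_ifs at e <;> omega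
  have f3 : i' ≤ i := by
    have e : (if i ≤ (i-1)+1 ∧ (i-1)+1 ≤ k-1 then (1:ℕ) else if k ≤ (i-1)+1 then 2 else 0)
        = (if i' ≤ (i-1)+1 ∧ (i-1)+1 ≤ k'-1 then 1 else if k' ≤ (i-1)+1 then 2 else 0) :=
      congrFun h ⟨i-1, by omega⟩
    split_ifs at e <;> omega
  have f4 : i ≤ i' := by
    have e : (if i ≤ (i'-1)+1 ∧ (i'-1)+1 ≤ k-1 then (1:ℕ) else if k ≤ (i'-1)+1 then 2 else 0)
        = (if i' ≤ (i'-1)+1 ∧ (i'-1)+1 ≤ k'-1 then 1 else if k' ≤ (i'-1)+1 then 2 else 0) :=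
      congrFun h ⟨i'-1, by omega⟩
    split_ifs at e <;> omega
  omega

lemma betaB_ne_gammaB {r a b a' k' : ℕ} (hk1 : 1 ≤ k') (hk2 : k' ≤ r) :
    betaB r a b ≠ gammaB r a' k' := by
  intro h
  have e : (if a ≤ (r-1)+1 ∧ (r-1)+1 ≤ b then (1:ℕ) else 0)
      = (if a' ≤ (r-1)+1 ∧ (r-1)+1 ≤ k'-1 then 1 else if k' ≤ (r-1)+1 then 2 else 0) :=
    congrFun h ⟨r-1, by omega⟩
  split_ifs at e <;> omega

lemma betaB_mem {r i k : ℕ} (h1 : 1 ≤ i) (h2 : i ≤ k) (h3 : k ≤ r) :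
    betaB r i k ∈ posRootsB r := by
  apply Finset.mem_union_left
  exact Finset.mem_image.2 ⟨(i, k), by
    simp only [Finset.mem_filter, Finset.mem_product, Finset.mem_Icc]; omega, rfl⟩

lemma gammaB_mem {r i k : ℕ} (h1 : 1 ≤ i) (h2 : i < k) (h3 : k ≤ r) :
    gammaB r i k ∈ posRootsB r := by
  apply Finset.mem_union_right
  exact Finset.mem_image.2 ⟨(i, k), by
    simp only [Finset.mem_filter, Finset.mem_product, Finset.mem_Icc]; omega, rfl⟩

lemma posRootsB_elim {r : ℕ} {v : Fin r → ℕ} (hv : v ∈ posRootsB r) :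
    (∃ i k, 1 ≤ i ∧ i ≤ k ∧ k ≤ r ∧ v = betaB r i k) ∨
    (∃ i k, 1 ≤ i ∧ i < k ∧ k ≤ r ∧ v = gammaB r i k) := by
  rcases Finset.mem_union.1 hv with h | h <;>
    [left; right] <;>
  · obtain ⟨p, hp, rfl⟩ := Finset.mem_image.1 h
    simp only [Finset.mem_filter, Finset.mem_product, Finset.mem_Icc] at hp
    exact ⟨p.1, p.2, by omega, by omega, by omega, rfl⟩

end RootLemmas
section XiLemmas

lemma XiB_beta_small {r : ℕ} (T : TabB r) (i : Fin r) {k : ℕ}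
    (hk1 : i.1 + 2 ≤ k) (hk2 : k ≤ r) :
    XiB r T (betaB r (i.1 + 1) (k - 1)) = ellB r T i k := by
  unfold XiB
  have hcal : ∀ i' : Fin r,
      ((∑ k' ∈ Finset.Icc (i'.1 + 2) r,
        if betaB r (i.1+1) (k-1) = betaB r (i'.1 + 1) (k' - 1) then ellB r T i' k' else 0) +
      (if betaB r (i.1+1) (k-1) = betaB r (i'.1 + 1) r then
        2 * ellB r T i' (2 * r + 1 - i'.1) + ellB r T i' (r + 1) else 0) +
      (∑ k' ∈ Finset.Icc (i'.1 + 2) r,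
        if betaB r (i.1+1) (k-1) = gammaB r (i'.1 + 1) k' then ellB r T i' (2 * r + 2 - k') else 0))
      = if i' = i then ellB r T i k else 0 := by
    intro i'
    have hC : (∑ k' ∈ Finset.Icc (i'.1 + 2) r,
        if betaB r (i.1+1) (k-1) = gammaB r (i'.1 + 1) k' then ellB r T i' (2 * r + 2 - k') else 0) = 0 := by
      apply Finset.sum_eq_zero
      intro k' hk'
      rw [Finset.mem_Icc] at hk'
      rw [if_neg (betaB_ne_gammaB (by omega) (by omega))]
    have hB : (if betaB r (i.1+1) (k-1) = betaB r (i'.1 + 1) r then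
        2 * ellB r T i' (2 * r + 1 - i'.1) + ellB r T i' (r + 1) else 0) = 0 := by
      rw [if_neg]
      intro h
      have := betaB_inj (by omega) (by omega) (by omega) (by omega)
        (by omega : i'.1 + 1 ≤ r) (le_refl r) h
      omega
    rw [hB, hC, add_zero, add_zero]
    by_cases hii : i' = i
    · subst hii
      rw [if_pos rfl, Finset.sum_eq_single_of_mem k (by rw [Finset.mem_Icc]; omega) ?_, if_pos rfl]
      intro k' hk' hne
      rw [Finset.mem_Icc] at hk'
      rw [if_neg]
      intro h
      have := betaB_inj (by omega) (by omega : i'.1+1 ≤ k-1) (by omega)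
        (by omega) (by omega : i'.1+1 ≤ k'-1) (by omega) h
      omega
    · rw [if_neg hii]
      apply Finset.sum_eq_zero
      intro k' hk'
      rw [Finset.mem_Icc] at hk'
      rw [if_neg]
      intro h
      have := betaB_inj (by omega) (by omega : i.1+1 ≤ k-1) (by omega)
        (by omega) (by omega : i'.1+1 ≤ k'-1) (by omega) h
      exact hii (Fin.ext (by omega))
  rw [Finset.sum_congr rfl fun i' _ => hcal i']
  simp

lemma XiB_beta_big {r : ℕ} (T : TabB r) (i : Fin r) :
    XiB r T (betaB r (i.1 + 1) r) =
      2 * ellB r T i (2 * r + 1 - i.1) + ellB r T i (r + 1) := by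
  unfold XiB
  have hcal : ∀ i' : Fin r,
      ((∑ k' ∈ Finset.Icc (i'.1 + 2) r,
        if betaB r (i.1+1) r = betaB r (i'.1 + 1) (k' - 1) then ellB r T i' k' else 0) +
      (if betaB r (i.1+1) r = betaB r (i'.1 + 1) r then
        2 * ellB r T i' (2 * r + 1 - i'.1) + ellB r T i' (r + 1) else 0) +
      (∑ k' ∈ Finset.Icc (i'.1 + 2) r,
        if betaB r (i.1+1) r = gammaB r (i'.1 + 1) k' then ellB r T i' (2 * r + 2 - k') else 0))
      = if i' = i then 2 * ellB r T i (2 * r + 1 - i.1) + ellB r T i (r + 1) else 0 := by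
    intro i'
    have hC : (∑ k' ∈ Finset.Icc (i'.1 + 2) r,
        if betaB r (i.1+1) r = gammaB r (i'.1 + 1) k' then ellB r T i' (2 * r + 2 - k') else 0) = 0 := by
      apply Finset.sum_eq_zero
      intro k' hk'
      rw [Finset.mem_Icc] at hk'
      rw [if_neg (betaB_ne_gammaB (by omega) (by omega))]
    have hA : (∑ k' ∈ Finset.Icc (i'.1 + 2) r,
        if betaB r (i.1+1) r = betaB r (i'.1 + 1) (k' - 1) then ellB r T i' k' else 0) = 0 := by
      apply Finset.sum_eq_zero
      intro k' hk'
      rw [Finset.mem_Icc] at hk'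
      rw [if_neg]
      intro h
      have := betaB_inj (by omega) (by omega : i.1+1 ≤ r) (le_refl r)
        (by omega) (by omega : i'.1+1 ≤ k'-1) (by omega) h
      omega
    rw [hA, hC, zero_add, add_zero]
    by_cases hii : i' = i
    · subst hii; rw [if_pos rfl, if_pos rfl]
    · rw [if_neg hii, if_neg]
      intro h
      have := betaB_inj (by omega) (by omega : i.1+1 ≤ r) (le_refl r)
        (by omega) (by omega : i'.1+1 ≤ r) (le_refl r) h
      exact hii (Fin.ext (by omega))
  rw [Finset.sum_congr rfl fun i' _ => hcal i']
  simp

lemma XiB_gamma {r : ℕ} (T : TabB r) (i : Fin r) {k : ℕ}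
    (hk1 : i.1 + 2 ≤ k) (hk2 : k ≤ r) :
    XiB r T (gammaB r (i.1 + 1) k) = ellB r T i (2 * r + 2 - k) := by
  unfold XiB
  have hcal : ∀ i' : Fin r,
      ((∑ k' ∈ Finset.Icc (i'.1 + 2) r,
        if gammaB r (i.1+1) k = betaB r (i'.1 + 1) (k' - 1) then ellB r T i' k' else 0) +
      (if gammaB r (i.1+1) k = betaB r (i'.1 + 1) r then
        2 * ellB r T i' (2 * r + 1 - i'.1) + ellB r T i' (r + 1) else 0) +
      (∑ k' ∈ Finset.Icc (i'.1 + 2) r,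
        if gammaB r (i.1+1) k = gammaB r (i'.1 + 1) k' then ellB r T i' (2 * r + 2 - k') else 0))
      = if i' = i then ellB r T i (2 * r + 2 - k) else 0 := by
    intro i'
    have hA : (∑ k' ∈ Finset.Icc (i'.1 + 2) r,
        if gammaB r (i.1+1) k = betaB r (i'.1 + 1) (k' - 1) then ellB r T i' k' else 0) = 0 := by
      apply Finset.sum_eq_zero
      intro k' hk'
      rw [Finset.mem_Icc] at hk'
      rw [if_neg (Ne.symm (betaB_ne_gammaB (by omega) (by omega)))]
    have hB : (if gammaB r (i.1+1) k = betaB r (i'.1 + 1) r then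
        2 * ellB r T i' (2 * r + 1 - i'.1) + ellB r T i' (r + 1) else 0) = 0 := by
      rw [if_neg]
      intro h
      exact betaB_ne_gammaB (by omega) (by omega) h.symm
    rw [hA, hB, zero_add, zero_add]
    by_cases hii : i' = i
    · subst hii
      rw [if_pos rfl, Finset.sum_eq_single_of_mem k (by rw [Finset.mem_Icc]; omega) ?_, if_pos rfl]
      intro k' hk' hne
      rw [Finset.mem_Icc] at hk'
      rw [if_neg]
      intro h
      have := gammaB_inj (by omega) (by omega : i'.1+1 < k) (by omega)
        (by omega) (by omega : i'.1+1 < k') (by omega) h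
      omega
    · rw [if_neg hii]
      apply Finset.sum_eq_zero
      intro k' hk'
      rw [Finset.mem_Icc] at hk'
      rw [if_neg]
      intro h
      have := gammaB_inj (by omega) (by omega : i.1+1 < k) (by omega)
        (by omega) (by omega : i'.1+1 < k') (by omega) h
      exact hii (Fin.ext (by omega))
  rw [Finset.sum_congr rfl fun i' _ => hcal i']
  simp

end XiLemmas
section Builder

lemma count_flatMap_replicate (f : ℕ → ℕ) (s n y : ℕ) :
    ((List.range' s n).flatMap fun x => List.replicate (f x) x).count y
      = if s ≤ y ∧ y < s + n then f y else 0 := by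
  induction n generalizing s with
  | zero => rw [if_neg (by omega)]; simp
  | succ n ih =>
    rw [List.range'_succ, List.flatMap_cons, List.count_append, List.count_replicate, ih]
    simp only [beq_iff_eq]
    by_cases h1 : s = y
    · subst h1
      rw [if_pos rfl, if_neg (by omega), if_pos (by omega), add_zero]
    · rw [if_neg h1, zero_add]
      have hiff : (s + 1 ≤ y ∧ y < s + 1 + n) ↔ (s ≤ y ∧ y < s + (n + 1)) := by omega
      rw [if_congr hiff rfl rfl]

lemma mem_flatMap_replicate {f : ℕ → ℕ} {s n y : ℕ}
    (h : y ∈ (List.range' s n).flatMap fun x => List.replicate (f x) x) :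
    s ≤ y ∧ y < s + n ∧ f y ≠ 0 := by
  have hc : ((List.range' s n).flatMap fun x => List.replicate (f x) x).count y ≠ 0 :=
    fun hc => (List.count_eq_zero.mp hc) h
  rw [count_flatMap_replicate] at hc
  by_cases hcc : s ≤ y ∧ y < s + n
  · rw [if_pos hcc] at hc; exact ⟨hcc.1, hcc.2, hc⟩
  · rw [if_neg hcc] at hc; omega

lemma pairwise_flatMap_replicate (f : ℕ → ℕ) (s n : ℕ) :
    ((List.range' s n).flatMap fun x => List.replicate (f x) x).Pairwise (· ≤ ·) := by
  induction n generalizing s with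
  | zero => simp
  | succ n ih =>
    rw [List.range'_succ, List.flatMap_cons, List.pairwise_append]
    refine ⟨List.pairwise_replicate.2 (by simp), ih (s+1), ?_⟩
    intro a ha b hb
    have ha' := List.eq_of_mem_replicate ha
    have hb' := mem_flatMap_replicate hb
    omega

variable (r : ℕ) (m : ℕ → ℕ → ℕ)

/-- The tail of row `i`: entries `x ∈ [i+2, 2r+1]`, each with multiplicity `m i x`. -/
def tlist (i : ℕ) : List ℕ :=
  (List.range' (i + 2) (2 * r - i)).flatMap fun x => List.replicate (m i x) x

/-- Intended length of row `i`. -/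
def lenB (i : ℕ) : ℕ := ∑ i' ∈ Finset.Ico i r, (1 + (tlist r m i').length)

/-- Row `i` (0-indexed): `lenB (i+1) + 1` copies of `i+1` followed by the tail. -/
def rowB (i : ℕ) : List ℕ :=
  List.replicate (lenB r m (i + 1) + 1) (i + 1) ++ tlist r m i

lemma count_tlist (i y : ℕ) (hi : i < r) :
    (tlist r m i).count y = if i + 2 ≤ y ∧ y < 2 * r + 2 then m i y else 0 := by
  rw [tlist, count_flatMap_replicate]
  have : i + 2 + (2 * r - i) = 2 * r + 2 := by omega
  rw [this]

lemma count_rowB (i y : ℕ) (hi : i < r) :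
    (rowB r m i).count y = (if i + 1 = y then lenB r m (i + 1) + 1 else 0) +
      (if i + 2 ≤ y ∧ y < 2 * r + 2 then m i y else 0) := by
  rw [rowB, List.count_append, List.count_replicate, count_tlist r m i y hi]
  simp only [beq_iff_eq]

lemma mem_rowB {i y : ℕ} (hi : i < r) (h : y ∈ rowB r m i) :
    y = i + 1 ∨ (i + 2 ≤ y ∧ y < 2 * r + 2 ∧ m i y ≠ 0) := by
  rw [rowB] at h
  rcases List.mem_append.1 h with h' | h'
  · exact Or.inl (List.eq_of_mem_replicate h')
  · right
    have := mem_flatMap_replicate h'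
    refine ⟨this.1, ?_, this.2.2⟩
    omega

lemma rowB_pairwise (i : ℕ) : (rowB r m i).Pairwise (· ≤ ·) := by
  rw [rowB, List.pairwise_append]
  refine ⟨List.pairwise_replicate.2 (by simp), pairwise_flatMap_replicate _ _ _, ?_⟩
  intro a ha b hb
  have ha' := List.eq_of_mem_replicate ha
  have hb' := mem_flatMap_replicate hb
  omega

lemma rowB_length (i : ℕ) (hi : i < r) :
    (rowB r m i).length = lenB r m i := by
  rw [rowB, List.length_append, List.length_replicate]
  have : lenB r m i = (1 + (tlist r m i).length) + lenB r m (i + 1) := by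
    rw [lenB, lenB, Finset.sum_eq_sum_Ico_succ_bot hi]
  omega

lemma lenB_last : lenB r m r = 0 := by simp [lenB]

/-- Build a tableau from count data. -/
def mkTab (hm1 : ∀ i, i < r → m i (r + 1) ≤ 1)
    (hm2 : ∀ i x, i < r → m i x ≠ 0 → x ≤ 2 * r + 1 - i) : TabB r where
  row := fun i => rowB r m i.1
  entry_mem := by
    intro i e he
    rcases mem_rowB r m i.2 he with h | h <;> omega
  row_weak := by
    intro i
    exact List.isChain_iff_pairwise.2 (rowB_pairwise r m i.1)
  first_col := by
    intro i
    show (rowB r m i.1).head? = some (i.1 + 1)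
    rw [rowB, List.replicate_succ, List.cons_append, List.head?_cons]
  row_bound := by
    intro i e he
    rcases mem_rowB r m i.2 he with h | h
    · have := i.2; omega
    · exact hm2 i.1 e i.2 h.2.2
  zero_once := by
    intro i
    show (rowB r m i.1).count (r + 1) ≤ 1
    rw [count_rowB r m i.1 (r+1) i.2, if_neg (by have := i.2; omega)]
    by_cases hc : i.1 + 2 ≤ r + 1 ∧ r + 1 < 2 * r + 2
    · rw [if_pos hc]; simpa using hm1 i.1 i.2
    · rw [if_neg hc]; simp
  col_le := by
    intro i h
    show (rowB r m (i.1 + 1)).length ≤ (rowB r m i.1).length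
    rw [rowB_length r m i.1 i.2, rowB_length r m (i.1+1) h]
    rw [lenB, lenB, Finset.sum_eq_sum_Ico_succ_bot i.2]
    omega
  col_strict := by
    intro i h j hj
    show (rowB r m i.1).getD j 0 < (rowB r m (i.1 + 1)).getD j 0
    rw [rowB_length r m (i.1+1) h] at hj
    have h1 : (rowB r m i.1).getD j 0 = i.1 + 1 := by
      rw [rowB, List.getD_append _ _ _ _ (by rw [List.length_replicate]; omega)]
      rw [List.getD_eq_getElem _ _ (by rw [List.length_replicate]; omega)]
      simp
    have h2 : i.1 + 2 ≤ (rowB r m (i.1+1)).getD j 0 := by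
      have hlen : j < (rowB r m (i.1+1)).length := by
        rw [rowB_length r m (i.1+1) h]; omega
      rw [List.getD_eq_getElem _ _ hlen]
      have hmem : (rowB r m (i.1+1))[j] ∈ rowB r m (i.1+1) := List.getElem_mem _
      rcases mem_rowB r m h hmem with h' | h' <;> omega
    omega
  marg_large := by
    intro i
    show (rowB r m i.1).count (i.1 + 1) = _
    rw [count_rowB r m i.1 (i.1+1) i.2, if_pos rfl, if_neg (by omega), add_zero]
    congr 1
    split
    · next hlt => rw [rowB_length r m (i.1+1) hlt]
    · next hlt => rw [(by omega : i.1 + 1 = r), lenB_last]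

lemma ellB_mkTab (hm1 : ∀ i, i < r → m i (r + 1) ≤ 1)
    (hm2 : ∀ i x, i < r → m i x ≠ 0 → x ≤ 2 * r + 1 - i)
    (i : Fin r) (x : ℕ) (hx : i.1 + 2 ≤ x) :
    ellB r (mkTab r m hm1 hm2) i x = if x < 2 * r + 2 then m i.1 x else 0 := by
  show (rowB r m i.1).count x = _
  rw [count_rowB r m i.1 x i.2, if_neg (by omega), zero_add]
  by_cases hc : x < 2 * r + 2
  · rw [if_pos hc, if_pos ⟨hx, hc⟩]
  · rw [if_neg hc, if_neg (by omega)]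

end Builder
section Ext

lemma row_lb {r : ℕ} (T : TabB r) (i : Fin r) : ∀ e ∈ T.row i, i.1 + 1 ≤ e := by
  have hp := List.isChain_iff_pairwise.mp (T.row_weak i)
  have hh := T.first_col i
  cases hrow : T.row i with
  | nil => rw [hrow] at hh; simp at hh
  | cons a l =>
    rw [hrow] at hh hp
    rw [List.head?_cons, Option.some.injEq] at hh
    subst hh
    intro e he
    rcases List.mem_cons.1 he with rfl | he
    · exact le_refl _
    · exact (List.pairwise_cons.1 hp).1 e he

lemma length_eq_sum_count (l : List ℕ) (s : Finset ℕ) (hl : ∀ e ∈ l, e ∈ s) :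
    l.length = ∑ x ∈ s, l.count x := by
  classical
  have h1 : ∑ x ∈ s, l.count x = ∑ x ∈ s, Multiset.count x (l : Multiset ℕ) :=
    Finset.sum_congr rfl fun x _ => (Multiset.coe_count x l).symm
  rw [h1]
  have h2 : ∑ x ∈ s, Multiset.count x (l : Multiset ℕ)
      = ∑ x ∈ (l : Multiset ℕ).toFinset, Multiset.count x (l : Multiset ℕ) := by
    refine (Finset.sum_subset ?_ ?_).symm
    · intro x hx
      exact hl x (by simpa using hx)
    · intro x _ hx
      exact Multiset.count_eq_zero.2 (by simpa using hx)
  rw [h2, Multiset.toFinset_sum_count_eq]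
  simp

lemma TabB_ext {r : ℕ} (T U : TabB r)
    (h : ∀ i : Fin r, ∀ x, i.1 + 2 ≤ x → ellB r T i x = ellB r U i x) : T = U := by
  have main : ∀ n : ℕ, ∀ i : Fin r, r - i.1 ≤ n → T.row i = U.row i := by
    intro n
    induction n with
    | zero => intro i _; have := i.2; omega
    | succ n ih =>
      intro i hi
      have hcount : ∀ x, (T.row i).count x = (U.row i).count x := by
        intro x
        by_cases hx1 : i.1 + 2 ≤ x
        · exact h i x hx1
        by_cases hx2 : x = i.1 + 1
        · subst hx2
          rw [T.marg_large i, U.marg_large i]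
          congr 1
          by_cases h' : i.1 + 1 < r
          · rw [dif_pos h', dif_pos h', ih ⟨i.1 + 1, h'⟩ (by simp; omega)]
          · rw [dif_neg h', dif_neg h']
        · have hT : x ∉ T.row i := fun hx => by have := row_lb T i x hx; omega
          have hU : x ∉ U.row i := fun hx => by have := row_lb U i x hx; omega
          rw [List.count_eq_zero.2 hT, List.count_eq_zero.2 hU]
      exact (List.perm_iff_count.2 hcount).eq_of_pairwise'
        (List.isChain_iff_pairwise.mp (T.row_weak i))
        (List.isChain_iff_pairwise.mp (U.row_weak i))
  obtain ⟨rowT, a1, a2, a3, a4, a5, a6, a7, a8⟩ := T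
  obtain ⟨rowU, b1, b2, b3, b4, b5, b6, b7, b8⟩ := U
  have : rowT = rowU := funext fun i => main r i (by omega)
  subst this
  rfl

lemma ellB_ub {r : ℕ} (T : TabB r) (i : Fin r) (x : ℕ) (hx : 2 * r + 1 - i.1 < x) :
    ellB r T i x = 0 := by
  refine List.count_eq_zero.2 fun hmem => ?_
  have := T.row_bound i x hmem
  omega

lemma ellB_ub' {r : ℕ} (T : TabB r) (i : Fin r) (x : ℕ) (hx : 2 * r + 1 < x) :
    ellB r T i x = 0 := by
  refine List.count_eq_zero.2 fun hmem => ?_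
  have := (T.entry_mem i x hmem).2
  omega

end Ext
section SumXi

lemma sum_XiB {r : ℕ} (T : TabB r) : ∑ v ∈ posRootsB r, XiB r T v = sizeB r T := by
  unfold XiB sizeB
  rw [Finset.sum_comm]
  refine Finset.sum_congr rfl fun i _ => ?_
  rw [Finset.sum_add_distrib, Finset.sum_add_distrib]
  have hA : ∑ v ∈ posRootsB r, (∑ k ∈ Finset.Icc (i.1+2) r,
      if v = betaB r (i.1+1) (k-1) then ellB r T i k else 0)
      = ∑ k ∈ Finset.Icc (i.1+2) r, ellB r T i k := by
    rw [Finset.sum_comm]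
    refine Finset.sum_congr rfl fun k hk => ?_
    rw [Finset.mem_Icc] at hk
    rw [Finset.sum_ite_eq' (posRootsB r) (betaB r (i.1+1) (k-1)) (fun _ => ellB r T i k),
      if_pos (betaB_mem (by omega) (by omega) (by omega))]
  have hB : ∑ v ∈ posRootsB r, (if v = betaB r (i.1+1) r then
      2 * ellB r T i (2*r+1-i.1) + ellB r T i (r+1) else 0)
      = 2 * ellB r T i (2*r+1-i.1) + ellB r T i (r+1) := by
    rw [Finset.sum_ite_eq' (posRootsB r) (betaB r (i.1+1) r)
      (fun _ => 2 * ellB r T i (2*r+1-i.1) + ellB r T i (r+1)),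
      if_pos (betaB_mem (by omega) (by have := i.2; omega) (le_refl r))]
  have hC : ∑ v ∈ posRootsB r, (∑ k ∈ Finset.Icc (i.1+2) r,
      if v = gammaB r (i.1+1) k then ellB r T i (2*r+2-k) else 0)
      = ∑ k ∈ Finset.Icc (i.1+2) r, ellB r T i (2*r+2-k) := by
    rw [Finset.sum_comm]
    refine Finset.sum_congr rfl fun k hk => ?_
    rw [Finset.mem_Icc] at hk
    rw [Finset.sum_ite_eq' (posRootsB r) (gammaB r (i.1+1) k) (fun _ => ellB r T i (2*r+2-k)),
      if_pos (gammaB_mem (by omega) (by omega) (by omega))]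
  rw [hA, hB, hC]
  have hir := i.2
  -- it remains to prove the per-row counting identity
  rw [← Finset.Ico_add_one_right_eq_Icc (i.1+2) r, ← Finset.Ico_add_one_right_eq_Icc (i.1+2) (2*r+1)]
  rw [← Finset.sum_Ico_consecutive (fun x => ellB r T i x)
    (by omega : i.1+2 ≤ r+1) (by omega : r+1 ≤ 2*r+1+1)]
  rw [Finset.sum_eq_sum_Ico_succ_bot (by omega : r+1 < 2*r+1+1) (fun x => ellB r T i x)]
  have hshrink : ∑ x ∈ Finset.Ico (r+1+1) (2*r+1+1), ellB r T i x
      = ∑ x ∈ Finset.Ico (r+1+1) (2*r+1+1-i.1), ellB r T i x := by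
    refine (Finset.sum_subset (Finset.Ico_subset_Ico (le_refl _) (by omega)) ?_).symm
    intro x hx hnx
    rw [Finset.mem_Ico] at hx
    rw [Finset.mem_Ico] at hnx
    exact ellB_ub T i x (by omega)
  have him : Finset.Ico (r+1+1) (2*r+1+1-i.1)
      = Finset.image (fun k => 2*r+2-k) (Finset.Ico (i.1+1) (r+1)) := by
    ext x
    simp only [Finset.mem_Ico, Finset.mem_image]
    constructor
    · intro hx
      exact ⟨2*r+2-x, by omega, by omega⟩
    · rintro ⟨k, hk, rfl⟩
      omega
  have hre : ∑ x ∈ Finset.Ico (r+1+1) (2*r+1+1-i.1), ellB r T i x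
      = ∑ k ∈ Finset.Ico (i.1+1) (r+1), ellB r T i (2*r+2-k) := by
    rw [him, Finset.sum_image]
    intro a ha b hb hab
    rw [Finset.coe_Ico, Set.mem_Ico] at ha hb
    simp only at hab
    omega
  have hbot : ∑ k ∈ Finset.Ico (i.1+1) (r+1), ellB r T i (2*r+2-k)
      = ellB r T i (2*r+1-i.1) + ∑ k ∈ Finset.Ico (i.1+2) (r+1), ellB r T i (2*r+2-k) := by
    rw [Finset.sum_eq_sum_Ico_succ_bot (by omega : i.1+1 < r+1) (fun k => ellB r T i (2*r+2-k))]
    have h1 : 2*r+2-(i.1+1) = 2*r+1-i.1 := by omega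
    rw [h1]
  rw [hshrink, hre, hbot]
  omega

end SumXi
section Maps

/-- Extension of a Kostant partition function to all vectors. -/
def cExt (r : ℕ) (c : {v // v ∈ posRootsB r} → ℕ) (v : Fin r → ℕ) : ℕ :=
  if h : v ∈ posRootsB r then c ⟨v, h⟩ else 0

/-- The count data associated to a Kostant partition. -/
def mOf (r : ℕ) (c : {v // v ∈ posRootsB r} → ℕ) (i x : ℕ) : ℕ :=
  if x ≤ r then cExt r c (betaB r (i+1) (x-1))
  else if x = r + 1 then cExt r c (betaB r (i+1) r) % 2
  else if x = 2*r+1-i then cExt r c (betaB r (i+1) r) / 2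
  else if x ≤ 2*r-i then cExt r c (gammaB r (i+1) (2*r+2-x))
  else 0

lemma mOf_le_one (r : ℕ) (c : {v // v ∈ posRootsB r} → ℕ) :
    ∀ i, i < r → mOf r c i (r+1) ≤ 1 := by
  intro i hi
  unfold mOf
  rw [if_neg (by omega), if_pos rfl]
  omega

lemma mOf_ub (r : ℕ) (c : {v // v ∈ posRootsB r} → ℕ) :
    ∀ i x, i < r → mOf r c i x ≠ 0 → x ≤ 2*r+1-i := by
  intro i x hi hne
  unfold mOf at hne
  split_ifs at hne <;> omega

/-- The tableau associated to a Kostant partition. -/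
def GTab (r : ℕ) (c : {v // v ∈ posRootsB r} → ℕ) : TabB r :=
  mkTab r (mOf r c) (mOf_le_one r c) (mOf_ub r c)

lemma ellB_GTab (r : ℕ) (c : {v // v ∈ posRootsB r} → ℕ) (i : Fin r) (x : ℕ)
    (hx : i.1 + 2 ≤ x) :
    ellB r (GTab r c) i x = if x < 2 * r + 2 then mOf r c i.1 x else 0 :=
  ellB_mkTab r (mOf r c) _ _ i x hx

lemma XiB_GTab (r : ℕ) (c : {v // v ∈ posRootsB r} → ℕ) :
    ∀ v, ∀ h : v ∈ posRootsB r, XiB r (GTab r c) v = c ⟨v, h⟩ := by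
  intro v h
  rcases posRootsB_elim h with ⟨i, k, h1, h2, h3, rfl⟩ | ⟨i, k, h1, h2, h3, rfl⟩
  · -- beta case
    have hr1 : 1 ≤ r := by omega
    set i0 : Fin r := ⟨i - 1, by omega⟩ with hi0
    have hi : i0.1 + 1 = i := by simp [hi0]; omega
    have key : XiB r (GTab r c) (betaB r i k) = cExt r c (betaB r i k) := by
      by_cases hkr : k = r
      · have hv : betaB r i k = betaB r (i0.1 + 1) r := by rw [hi, hkr]
        rw [hv]
        rw [XiB_beta_big (GTab r c) i0]
        rw [ellB_GTab r c i0 (2*r+1-i0.1) (by omega), if_pos (by omega)]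
        rw [ellB_GTab r c i0 (r+1) (by omega), if_pos (by omega)]
        have e1 : mOf r c i0.1 (2*r+1-i0.1) = cExt r c (betaB r (i0.1+1) r) / 2 := by
          unfold mOf
          rw [if_neg (by omega), if_neg (by omega), if_pos rfl]
        have e2 : mOf r c i0.1 (r+1) = cExt r c (betaB r (i0.1+1) r) % 2 := by
          unfold mOf
          rw [if_neg (by omega), if_pos rfl]
        rw [e1, e2]
        omega
      · have hv : betaB r i k = betaB r (i0.1 + 1) ((k+1) - 1) := by
          rw [hi]
          norm_num
        rw [hv]
        rw [XiB_beta_small (GTab r c) i0 (by omega) (by omega)]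
        rw [ellB_GTab r c i0 (k+1) (by omega), if_pos (by omega)]
        unfold mOf
        rw [if_pos (by omega : k + 1 ≤ r)]
    rw [key]
    exact dif_pos h
  · -- gamma case
    have hr1 : 1 ≤ r := by omega
    set i0 : Fin r := ⟨i - 1, by omega⟩ with hi0
    have hi : i0.1 + 1 = i := by simp [hi0]; omega
    have key : XiB r (GTab r c) (gammaB r i k) = cExt r c (gammaB r i k) := by
      have hv : gammaB r i k = gammaB r (i0.1 + 1) k := by rw [hi]
      rw [hv]
      rw [XiB_gamma (GTab r c) i0 (by omega) (by omega)]
      rw [ellB_GTab r c i0 (2*r+2-k) (by omega), if_pos (by omega)]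
      unfold mOf
      rw [if_neg (by omega), if_neg (by omega), if_neg (by omega), if_pos (by omega)]
      rw [show 2*r+2-(2*r+2-k) = k by omega]
    rw [key]
    exact dif_pos h

lemma GTab_XiB (r : ℕ) (T : TabB r) :
    GTab r (fun α => XiB r T α.1) = T := by
  apply TabB_ext
  intro i x hx
  set c : {v // v ∈ posRootsB r} → ℕ := fun α => XiB r T α.1 with hc
  have hcE : ∀ v, cExt r c v = if v ∈ posRootsB r then XiB r T v else 0 := by
    intro v
    unfold cExt
    split_ifs with h' <;> simp [hc]
  rw [ellB_GTab r c i x hx]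
  have hir := i.2
  by_cases hbig : x < 2 * r + 2
  swap
  · rw [if_neg hbig, ellB_ub' T i x (by omega)]
  rw [if_pos hbig]
  unfold mOf
  by_cases hc1 : x ≤ r
  · rw [if_pos hc1, hcE, if_pos (betaB_mem (by omega) (by omega) (by omega)),
      XiB_beta_small T i (by omega : i.1 + 2 ≤ x) (by omega)]
  rw [if_neg hc1]
  by_cases hc2 : x = r + 1
  · subst hc2
    rw [if_pos rfl, hcE, if_pos (betaB_mem (by omega) (by omega) (le_refl r)),
      XiB_beta_big T i]
    have := T.zero_once i
    have hz : ellB r T i (r+1) ≤ 1 := this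
    omega
  rw [if_neg hc2]
  by_cases hc3 : x = 2*r+1-i.1
  · rw [if_pos hc3, hcE, if_pos (betaB_mem (by omega) (by omega) (le_refl r)),
      XiB_beta_big T i]
    have hz : ellB r T i (r+1) ≤ 1 := T.zero_once i
    rw [hc3]
    omega
  rw [if_neg hc3]
  by_cases hc4 : x ≤ 2*r-i.1
  · rw [if_pos hc4, hcE, if_pos (gammaB_mem (by omega) (by omega) (by omega)),
      XiB_gamma T i (by omega : i.1 + 2 ≤ 2*r+2-x) (by omega)]
    rw [show 2*r+2-(2*r+2-x) = x by omega]
  · rw [if_neg hc4, ellB_ub T i x (by omega)]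

lemma negwtB_eq (r : ℕ) (T : TabB r) :
    negwtB r T = ∑ α : {v // v ∈ posRootsB r}, XiB r T α.1 • α.1 := by
  rw [negwtB, ← Finset.sum_attach (posRootsB r) (fun v => XiB r T v • v),
    ← Finset.univ_eq_attach]

lemma sizeB_eq (r : ℕ) (T : TabB r) :
    sizeB r T = ∑ α : {v // v ∈ posRootsB r}, XiB r T α.1 := by
  rw [← sum_XiB T, ← Finset.sum_attach (posRootsB r) (fun v => XiB r T v),
    ← Finset.univ_eq_attach]

end Maps
section Final

lemma negwtB_GTab (r : ℕ) (c : {v // v ∈ posRootsB r} → ℕ) :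
    negwtB r (GTab r c) = ∑ α : {v // v ∈ posRootsB r}, c α • α.1 := by
  rw [negwtB_eq]
  exact Finset.sum_congr rfl fun α _ => by rw [XiB_GTab r c α.1 α.2]

lemma sizeB_GTab (r : ℕ) (c : {v // v ∈ posRootsB r} → ℕ) :
    sizeB r (GTab r c) = ∑ α : {v // v ∈ posRootsB r}, c α := by
  rw [sizeB_eq]
  exact Finset.sum_congr rfl fun α _ => by rw [XiB_GTab r c α.1 α.2]

end Final
/-- for every `μ` in the positive root lattice of `B_r`,
Lusztig's `q`-analogue of the Kostant partition function satisfies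
`𝒫(μ;q) = Σ_{T ∈ 𝒯(∞), -wt(T) = μ} q^{|T|}`, stated coefficientwise in `q`. -/
theorem stmt12 (r : ℕ) (hr : 2 ≤ r) :
    ∀ μ : Fin r → ℕ, ∀ d : ℕ,
      Nat.card {c : {v // v ∈ posRootsB r} → ℕ //
          (∑ α : {v // v ∈ posRootsB r}, c α • α.1) = μ ∧
          (∑ α : {v // v ∈ posRootsB r}, c α) = d}
      = Nat.card {T : TabB r // negwtB r T = μ ∧ sizeB r T = d} := by
  intro μ d
  refine Nat.card_congr
    ⟨fun p => ⟨GTab r p.1, by rw [negwtB_GTab]; exact p.2.1, by rw [sizeB_GTab]; exact p.2.2⟩,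
     fun p => ⟨fun α => XiB r p.1 α.1,
       by rw [← negwtB_eq]; exact p.2.1, by rw [← sizeB_eq]; exact p.2.2⟩,
     fun p => ?_, fun p => ?_⟩
  · apply Subtype.ext
    funext α
    show XiB r (GTab r p.1) α.1 = p.1 α
    rw [XiB_GTab r p.1 α.1 α.2]
  · apply Subtype.ext
    show GTab r (fun α => XiB r p.1 α.1) = p.1
    exact GTab_XiB r p.1
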